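/- arXiv:1708.03010 — 2 statements merged into one kernel-verified Lean document; each statement's English description precedes it below -/
import Mathlib

section
/- Let G be a finite simple graph, K a field, and I_G the edge ideal of G. If G has an odd cycle on distinct vertices v_1, …, v_{2n−1}, then the monomial f = x_{v_1} x_{v_2} ⋯ x_{v_{2n−1}} lies in I_G^{(n)} but not in I_G^n. -/
/-- The `n`-th symbolic power of an ideal `I`:
`I^{(n)} = ⋂_{𝔭 ∈ Min(I)} (I^n R_𝔭 ∩ R)`, the intersection over the minimal primes `𝔭`
of `I` of the preimages in `R` of `I^n R_𝔭` under the localization maps. -/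
noncomputable def symbolicPower {R : Type*} [CommRing R] (I : Ideal R) (n : ℕ) : Ideal R :=
  ⨅ (P : Ideal R) (hP : P ∈ I.minimalPrimes),
    haveI : P.IsPrime := hP.1.1
    (Ideal.map (algebraMap R (Localization.AtPrime P)) (I ^ n)).comap
      (algebraMap R (Localization.AtPrime P))

/-- The edge ideal of a simple graph `G`: the ideal of `K[x_v : v ∈ V]` generated by the
monomials `x_u * x_v` over all edges `{u, v}` of `G`. -/
noncomputable def edgeIdeal (K : Type*) [Field K] {V : Type*} (G : SimpleGraph V) :
    Ideal (MvPolynomial V K) :=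
  Ideal.span {m | ∃ u v, G.Adj u v ∧ m = MvPolynomial.X u * MvPolynomial.X v}

open MvPolynomial in
lemma edge_mem_edgeIdeal {K V : Type*} [Field K] {G : SimpleGraph V} {a b : V}
    (h : G.Adj a b) : (X a * X b : MvPolynomial V K) ∈ edgeIdeal K G :=
  Ideal.subset_span ⟨a, b, h, rfl⟩

open MvPolynomial in
/-- A chain of adjacent vertices of even length `2m` gives a product in `I^m`. -/
lemma chain_prod_mem_pow {K V : Type*} [Field K] {G : SimpleGraph V} :
    ∀ (m : ℕ) (L : List V), List.Chain' G.Adj L → L.length = 2 * m →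
      ((L.map fun x => (X x : MvPolynomial V K)).prod) ∈ edgeIdeal K G ^ m := by
  intro m
  induction m with
  | zero => intro L _ _; simp [Ideal.one_eq_top]
  | succ m ih =>
    intro L hL hlen
    match L with
    | [] => simp at hlen
    | [a] => simp [Nat.mul_succ] at hlen
    | a :: b :: L' =>
      have hab : G.Adj a b := hL.rel_head
      have hL' : List.Chain' G.Adj L' := (hL.tail).tail
      have hlen' : L'.length = 2 * m := by simp at hlen; omega
      have := ih L' hL' hlen'
      have : (X a * X b : MvPolynomial V K) *
          ((L'.map fun x => (X x : MvPolynomial V K)).prod) ∈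
          edgeIdeal K G * edgeIdeal K G ^ m :=
        Ideal.mul_mem_mul (edge_mem_edgeIdeal hab) this
      rw [← pow_succ'] at this
      simpa [mul_assoc] using this

open MvPolynomial in
/-- The key decomposition: if `L₁ ++ y :: L₂` is a cyclic chain of odd length `2n-1`
(preceded by `u`, with last element `u`), and `z` is adjacent to `y`,
then `(∏ x_L) * x_z ∈ I^n`. -/
lemma cyclic_prod_mul_mem_pow {K V : Type*} [Field K] {G : SimpleGraph V}
    {n : ℕ} (hn : 1 ≤ n) {u y z : V} {L₁ L₂ : List V}
    (hchain : List.Chain' G.Adj (u :: (L₁ ++ y :: L₂)))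
    (hlast : (L₁ ++ y :: L₂).getLast? = some u)
    (hlen : (L₁ ++ y :: L₂).length = 2 * n - 1)
    (hadj : G.Adj y z) :
    (((L₁ ++ y :: L₂).map fun x => (X x : MvPolynomial V K)).prod) * X z ∈
      edgeIdeal K G ^ n := by
  have hCL : List.Chain' G.Adj (L₁ ++ y :: L₂) := hchain.tail
  have hC1 : List.Chain' G.Adj (L₁ ++ [y]) := (List.isChain_split.mp hCL).1
  have hC2 : List.Chain' G.Adj (y :: L₂) := (List.isChain_split.mp hCL).2
  have hrest : List.Chain' G.Adj (L₂ ++ L₁) := by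
    refine List.isChain_append.mpr ?_
    refine ⟨hC2.tail, (List.isChain_append.mp hC1).1, ?_⟩
    intro x hx w hw
    have hL₂ne : L₂ ≠ [] := by rintro rfl; simp at hx
    have hx' : x = u := by
      have h1 : L₂.getLast? = some u := by
        rw [List.getLast?_append_cons] at hlast
        rw [show (y :: L₂) = [y] ++ L₂ from rfl,
          List.getLast?_append_of_ne_nil _ hL₂ne] at hlast
        exact hlast
      rw [h1] at hx
      exact (Option.some_inj.mp hx).symm
    rw [hx']
    cases L₁ with
    | nil => simp at hw
    | cons a T =>
      have hw' : a = w := by simpa using hw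
      have hchain' : List.Chain' G.Adj (u :: a :: (T ++ y :: L₂)) := by
        simpa using hchain
      exact hw' ▸ hchain'.rel_head
  have hrlen : (L₂ ++ L₁).length = 2 * (n - 1) := by
    simp only [List.length_append, List.length_cons] at hlen ⊢
    omega
  have hmem := chain_prod_mem_pow (K := K) (n - 1) (L₂ ++ L₁) hrest hrlen
  have key : (((L₁ ++ y :: L₂).map fun x => (X x : MvPolynomial V K)).prod) * X z =
      (X y * X z) * (((L₂ ++ L₁).map fun x => (X x : MvPolynomial V K)).prod) := by
    simp only [List.map_append, List.prod_append, List.map_cons, List.prod_cons]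
    ring
  rw [key]
  have hfin : (X y * X z : MvPolynomial V K) *
      (((L₂ ++ L₁).map fun x => (X x : MvPolynomial V K)).prod) ∈
      edgeIdeal K G * edgeIdeal K G ^ (n - 1) :=
    Ideal.mul_mem_mul (edge_mem_edgeIdeal hadj) hmem
  rw [← pow_succ'] at hfin
  have hn' : n - 1 + 1 = n := by omega
  rwa [hn'] at hfin

/-- Every element of a cyclic chain has a neighbor in the chain. -/
lemma exists_adj_mem_of_mem_cyclic {V : Type*} {G : SimpleGraph V} {u : V} {L : List V}
    (hchain : List.Chain' G.Adj (u :: L))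
    (hlast : L.getLast? = some u) {z : V} (hz : z ∈ L) :
    ∃ y ∈ L, G.Adj y z := by
  obtain ⟨M₁, M₂, rfl⟩ := List.append_of_mem hz
  rcases M₁ with _ | ⟨a, M₁'⟩
  · -- z is the head; its neighbor is u = the last element
    simp only [List.nil_append] at hlast hchain ⊢
    have h1 := List.getLast?_eq_getLast (l := z :: M₂) (by simp)
    rw [hlast] at h1
    have h2 : u = (z :: M₂).getLast (by simp) := Option.some_inj.mp h1
    refine ⟨u, ?_, ?_⟩
    · rw [h2]; exact List.getLast_mem _
    · exact hchain.rel_head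
  · -- z has a predecessor: the last element of a :: M₁'
    have hC : List.Chain' G.Adj ((a :: M₁') ++ [z]) :=
      (List.isChain_split.mp hchain.tail).1
    have hadj := (List.isChain_append.mp hC).2.2
    refine ⟨(a :: M₁').getLast (by simp),
      List.mem_append_left _ (List.getLast_mem (by simp)), ?_⟩
    exact hadj _ (List.getLast?_eq_getLast (by simp)) z rfl

/-- For a minimal prime `P` over `I` and `a ∈ P`, some multiple `s * a^m` with
`s ∉ P` lies in `I`. -/
lemma exists_mul_pow_mem_of_minimalPrime {R : Type*} [CommRing R] {I P : Ideal R}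
    (hP : P ∈ I.minimalPrimes) {a : R} (_ha : a ∈ P) :
    ∃ (m : ℕ) (s : R), s ∉ P ∧ s * a ^ m ∈ I := by
  by_contra hcon
  push_neg at hcon
  haveI hPp : P.IsPrime := hP.1.1
  set T : Submonoid R :=
    { carrier := {r | ∃ (m : ℕ) (s : R), s ∉ P ∧ r = s * a ^ m}
      mul_mem' := by
        rintro r r' ⟨m, s, hs, rfl⟩ ⟨m', s', hs', rfl⟩
        exact ⟨m + m', s * s', fun h => ((hPp.mem_or_mem h).elim hs hs'), by ring⟩
      one_mem' := ⟨0, 1, hPp.ne_top ∘ (Ideal.eq_top_iff_one P).mpr, by simp⟩ } with hT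
  have hdisj : Disjoint (I : Set R) (T : Set R) := by
    rw [Set.disjoint_left]
    rintro r hrI ⟨m, s, hs, rfl⟩
    exact hcon m s hs hrI
  obtain ⟨Q, hQp, hIQ, hQT⟩ := Ideal.exists_le_prime_disjoint I T hdisj
  have hQP : Q ≤ P := by
    intro x hx
    by_contra hxP
    exact Set.disjoint_left.mp hQT hx ⟨0, x, hxP, by simp⟩
  have haQ : a ∉ Q := fun h =>
    Set.disjoint_left.mp hQT h ⟨1, 1, hPp.ne_top ∘ (Ideal.eq_top_iff_one P).mpr, by simp⟩
  exact haQ (hP.2 ⟨hQp, hIQ⟩ hQP _ha)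

open MvPolynomial in
lemma edgeIdeal_eq_span_monomial {K V : Type*} [Field K] (G : SimpleGraph V) :
    edgeIdeal K G = Ideal.span ((fun s => (monomial s (1 : K) : MvPolynomial V K)) ''
      {σ | ∃ a b, G.Adj a b ∧ σ = Finsupp.single a 1 + Finsupp.single b 1}) := by
  unfold edgeIdeal
  congr 1
  ext m
  constructor
  · rintro ⟨a, b, hab, rfl⟩
    exact ⟨Finsupp.single a 1 + Finsupp.single b 1, ⟨a, b, hab, rfl⟩, by
      rw [X, X, monomial_mul, one_mul]⟩
  · rintro ⟨σ, ⟨a, b, hab, rfl⟩, rfl⟩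
    exact ⟨a, b, hab, by rw [X, X, monomial_mul, one_mul]⟩

open MvPolynomial in
/-- If `P` is a minimal prime over the edge ideal containing `X v₁`, then some neighbor
variable of `v₁` is not in `P`. -/
lemma exists_adj_X_not_mem {K V : Type*} [Field K] {G : SimpleGraph V}
    {P : Ideal (MvPolynomial V K)} (hP : P ∈ (edgeIdeal K G).minimalPrimes)
    {v₁ : V} (hv : (X v₁ : MvPolynomial V K) ∈ P) :
    ∃ y, G.Adj v₁ y ∧ (X y : MvPolynomial V K) ∉ P := by
  by_contra hcon
  push_neg at hcon
  haveI hPp : P.IsPrime := hP.1.1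
  have hIP : edgeIdeal K G ≤ P := hP.1.2
  obtain ⟨m, s, hsP, hsI⟩ := exists_mul_pow_mem_of_minimalPrime hP hv
  apply hsP
  -- write s as the sum of its monomials; show each is in P
  rw [← support_sum_monomial_coeff s]
  apply Ideal.sum_mem
  intro α hα
  -- the shifted exponent lies in the support of s * X v₁ ^ m
  have hcoeff : coeff (α + Finsupp.single v₁ m) (s * X v₁ ^ m) = coeff α s := by
    rw [X_pow_eq_monomial, coeff_mul_monomial, mul_one]
  have hmemsup : α + Finsupp.single v₁ m ∈ (s * X v₁ ^ m).support := by
    rw [mem_support_iff, hcoeff]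
    exact mem_support_iff.mp hα
  rw [edgeIdeal_eq_span_monomial] at hsI
  obtain ⟨σ, ⟨a, b, hab, rfl⟩, hle⟩ := mem_ideal_span_monomial_image.mp hsI _ hmemsup
  have hne : a ≠ b := G.ne_of_adj hab
  -- find c ≠ v₁ with X c ∈ P and α c ≠ 0
  have hfind : ∃ c, c ≠ v₁ ∧ (X c : MvPolynomial V K) ∈ P ∧ α c ≠ 0 := by
    have hlea := Finsupp.le_def.mp hle a
    have hleb := Finsupp.le_def.mp hle b
    have ha_a : (Finsupp.single a 1 : V →₀ ℕ) a = 1 := Finsupp.single_eq_same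
    have hb_a : (Finsupp.single b 1 : V →₀ ℕ) a = 0 := Finsupp.single_eq_of_ne' (Ne.symm hne)
    have ha_b : (Finsupp.single a 1 : V →₀ ℕ) b = 0 := Finsupp.single_eq_of_ne' hne
    have hb_b : (Finsupp.single b 1 : V →₀ ℕ) b = 1 := Finsupp.single_eq_same
    rw [Finsupp.add_apply, Finsupp.add_apply, ha_a, hb_a] at hlea
    rw [Finsupp.add_apply, Finsupp.add_apply, ha_b, hb_b] at hleb
    by_cases hav : a = v₁
    · have hbv : b ≠ v₁ := fun h => hne (hav.trans h.symm)
      have hv_b : (Finsupp.single v₁ m : V →₀ ℕ) b = 0 := Finsupp.single_eq_of_ne' (Ne.symm hbv)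
      rw [hv_b] at hleb
      exact ⟨b, hbv, hcon b (hav ▸ hab), by omega⟩
    · by_cases hbv : b = v₁
      · have hv_a : (Finsupp.single v₁ m : V →₀ ℕ) a = 0 :=
          Finsupp.single_eq_of_ne' (Ne.symm hav)
        rw [hv_a] at hlea
        exact ⟨a, hav, hcon a (hbv ▸ hab.symm), by omega⟩
      · have hv_a : (Finsupp.single v₁ m : V →₀ ℕ) a = 0 :=
          Finsupp.single_eq_of_ne' (Ne.symm hav)
        have hv_b : (Finsupp.single v₁ m : V →₀ ℕ) b = 0 :=
          Finsupp.single_eq_of_ne' (Ne.symm hbv)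
        rw [hv_a] at hlea
        rw [hv_b] at hleb
        have hXab : (X a * X b : MvPolynomial V K) ∈ P := hIP (edge_mem_edgeIdeal hab)
        rcases hPp.mem_or_mem hXab with h | h
        · exact ⟨a, hav, h, by omega⟩
        · exact ⟨b, hbv, h, by omega⟩
  obtain ⟨c, hcv, hcP, hcα⟩ := hfind
  have hsingle : Finsupp.single c 1 ≤ α := by
    rw [Finsupp.single_le_iff]
    omega
  have hmono : (monomial α (coeff α s) : MvPolynomial V K) =
      X c * monomial (α - Finsupp.single c 1) (coeff α s) := by
    rw [X, monomial_mul, one_mul]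
    congr 1
    rw [add_comm, tsub_add_cancel_of_le hsingle]
  rw [hmono]
  exact P.mul_mem_right _ hcP

open MvPolynomial in
lemma not_mem_pow {K V : Type*} [Field K] {G : SimpleGraph V} {n : ℕ} (hn : 0 < n)
    {L : List V} (hlen : L.length = 2 * n - 1) :
    ((L.map fun x => (X x : MvPolynomial V K)).prod) ∉ edgeIdeal K G ^ n := by
  intro hmem
  set φ : MvPolynomial V K →+* Polynomial K :=
    (eval₂Hom Polynomial.C fun _ => Polynomial.X : MvPolynomial V K →+* Polynomial K)
  have hφf : φ ((L.map fun x => (X x : MvPolynomial V K)).prod) =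
      Polynomial.X ^ (2 * n - 1) := by
    rw [map_list_prod, List.map_map]
    have hcomp : (φ ∘ fun x => (X x : MvPolynomial V K)) =
        fun _ => (Polynomial.X : Polynomial K) := by
      funext x
      simp [φ]
    rw [hcomp, List.map_const', List.prod_replicate, hlen]
  have hmap : Ideal.map φ (edgeIdeal K G ^ n) ≤ Ideal.span {Polynomial.X ^ (2 * n)} := by
    rw [Ideal.map_pow]
    have h1 : Ideal.map φ (edgeIdeal K G) ≤ Ideal.span {(Polynomial.X : Polynomial K) ^ 2} := by
      rw [edgeIdeal, Ideal.map_span, Ideal.span_le]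
      rintro _ ⟨q, ⟨a, b, hab, rfl⟩, rfl⟩
      simp only [SetLike.mem_coe, Ideal.mem_span_singleton]
      have : φ (X a * X b) = Polynomial.X ^ 2 := by simp [φ, sq]
      rw [this]
    calc Ideal.map φ (edgeIdeal K G) ^ n ≤ Ideal.span {(Polynomial.X : Polynomial K) ^ 2} ^ n :=
          Ideal.pow_right_mono h1 n
      _ = Ideal.span {(Polynomial.X : Polynomial K) ^ (2 * n)} := by
          rw [Ideal.span_singleton_pow, ← pow_mul]
  have hX : Polynomial.X ^ (2 * n - 1) ∈ Ideal.span {(Polynomial.X : Polynomial K) ^ (2 * n)} := by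
    rw [← hφf]
    exact hmap (Ideal.mem_map_of_mem φ hmem)
  rw [Ideal.mem_span_singleton] at hX
  have h2 := (Polynomial.X_pow_dvd_iff.mp hX) (2 * n - 1) (by omega)
  rw [Polynomial.coeff_X_pow, if_pos rfl] at h2
  exact one_ne_zero h2

open MvPolynomial in
lemma prod_mem_symbolicPower_aux {K V : Type*} [Field K] {G : SimpleGraph V}
    {n : ℕ} (hn2 : 2 ≤ n) (u : V) (L : List V)
    (hchain : List.Chain' G.Adj (u :: L)) (hLne : L ≠ [])
    (hlast : L.getLast? = some u) (hLlen : L.length = 2 * n - 1) :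
    ((L.map fun x => (X x : MvPolynomial V K)).prod) ∈
      symbolicPower (edgeIdeal K G) n := by
  rw [symbolicPower]
  simp only [Submodule.mem_iInf]
  intro P hP
  haveI hPp : P.IsPrime := hP.1.1
  rw [Ideal.mem_comap]
  have hmain : ∃ zz : V, (X zz : MvPolynomial V K) ∉ P ∧
      ((L.map fun x => (X x : MvPolynomial V K)).prod) * X zz ∈ edgeIdeal K G ^ n := by
    by_cases hcase : ∃ z ∈ L, (X z : MvPolynomial V K) ∉ P
    · obtain ⟨z, hzL, hzP⟩ := hcase
      obtain ⟨y, hyL, hadj⟩ := exists_adj_mem_of_mem_cyclic hchain hlast hzL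
      obtain ⟨L₁, L₂, hLsplit⟩ := List.append_of_mem hyL
      refine ⟨z, hzP, ?_⟩
      rw [hLsplit] at hchain hlast hLlen ⊢
      exact cyclic_prod_mul_mem_pow (by omega) hchain hlast hLlen hadj
    · push_neg at hcase
      obtain ⟨v₁, T, hLT⟩ := List.exists_cons_of_ne_nil hLne
      have hv₁mem : v₁ ∈ L := by rw [hLT]; exact List.mem_cons_self
      have hv₁ : (X v₁ : MvPolynomial V K) ∈ P := hcase v₁ hv₁mem
      obtain ⟨y, hadj, hyP⟩ := exists_adj_X_not_mem hP hv₁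
      refine ⟨y, hyP, ?_⟩
      rw [hLT] at hchain hlast hLlen ⊢
      exact cyclic_prod_mul_mem_pow (n := n) (L₁ := []) (L₂ := T) (by omega)
        hchain hlast hLlen hadj
  obtain ⟨z, hzP, hmem⟩ := hmain
  have hunit : IsUnit (algebraMap (MvPolynomial V K) (Localization.AtPrime P) (X z)) :=
    IsLocalization.map_units (Localization.AtPrime P) (⟨X z, hzP⟩ : P.primeCompl)
  obtain ⟨v, hv⟩ := hunit
  have heq : algebraMap (MvPolynomial V K) (Localization.AtPrime P)
      ((L.map fun x => (X x : MvPolynomial V K)).prod) =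
      (↑v⁻¹ : Localization.AtPrime P) *
        algebraMap (MvPolynomial V K) (Localization.AtPrime P)
          (((L.map fun x => (X x : MvPolynomial V K)).prod) * X z) := by
    rw [map_mul, ← hv, ← mul_assoc, mul_comm (↑v⁻¹ : Localization.AtPrime P), mul_assoc]
    simp
  rw [heq]
  exact Ideal.mul_mem_left _ _ (Ideal.mem_map_of_mem _ hmem)

/-- If a finite simple graph `G` has an odd cycle on `2n - 1` distinct vertices
`v_1, …, v_{2n-1}`, then the monomial `f = x_{v_1} ⋯ x_{v_{2n-1}}` lies in `I_G^{(n)}`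
but not in `I_G^n`.  (The distinct vertices of the cycle are exactly the entries of
`w.support.tail` for a cycle walk `w`.) -/
theorem prod_mem_symbolicPower_not_mem_pow_of_odd_cycle {K V : Type*} [Field K] [Fintype V]
    [DecidableEq V] (G : SimpleGraph V) (n : ℕ) (hn : 0 < n)
    (u : V) (w : G.Walk u u) (hw : w.IsCycle) (hlen : w.length = 2 * n - 1) :
    (w.support.tail.map (fun x => (MvPolynomial.X x : MvPolynomial V K))).prod ∈
        symbolicPower (edgeIdeal K G) n ∧
      (w.support.tail.map (fun x => (MvPolynomial.X x : MvPolynomial V K))).prod ∉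
        edgeIdeal K G ^ n := by
  classical
  have h3 : 3 ≤ w.length := hw.three_le_length
  have hn2 : 2 ≤ n := by omega
  have hLlen : w.support.tail.length = 2 * n - 1 := by
    rw [List.length_tail, w.length_support]
    omega
  have hLne : w.support.tail ≠ [] := by
    intro h
    rw [h] at hLlen
    simp at hLlen
    omega
  have hchain : List.Chain' G.Adj (u :: w.support.tail) :=
    (congrArg (List.Chain' G.Adj) w.support_eq_cons) ▸ w.isChain_adj_support
  have hlast : w.support.tail.getLast? = some u := by
    have h1 : w.support.getLast? = some u :=
      (List.getLast?_eq_getLast w.support_ne_nil).trans (congrArg some w.getLast_support)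
    have h2 : (u :: w.support.tail).getLast? = some u :=
      (congrArg List.getLast? w.support_eq_cons).symm.trans h1
    obtain ⟨c, T, hT⟩ := List.exists_cons_of_ne_nil hLne
    rw [hT] at h2 ⊢
    rwa [List.getLast?_cons_cons] at h2
  exact ⟨prod_mem_symbolicPower_aux hn2 u _ hchain hLne hlast hLlen,
    not_mem_pow hn hLlen⟩
end

section
/- Let G be a finite simple graph, K a field, I = I_G the edge ideal of G, and c = height(I). If I^{(k)} = I^k for all 1 ≤ k ≤ c, then G is bipartite. -/
/-- The height of an ideal `I`: the minimum of the heights of the primes containing `I`,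
where the height of a prime `𝔭` is the Krull dimension of `R_𝔭`. -/
noncomputable def idealHeight {R : Type*} [CommRing R] (I : Ideal R) : WithBot (WithTop ℕ) :=
  ⨅ (p : Ideal R) (hp : p.IsPrime) (_ : I ≤ p),
    haveI := hp
    ringKrullDim (Localization.AtPrime p)

/-- A graph is bipartite if its vertex set can be partitioned into two sets so that every
edge has one endpoint in each. -/
def IsBipartite {V : Type*} (G : SimpleGraph V) : Prop :=
  ∃ A : Set V, ∀ u v : V, G.Adj u v → (u ∈ A ↔ v ∉ A)

/-! ### Auxiliary lemmas -/

open MvPolynomial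

attribute [local instance] Classical.propDecidable

section SpanX
variable {K V : Type*} [Field K]

private noncomputable def killVars (K : Type*) [Field K] {V : Type*} (A : Set V) :
    MvPolynomial V K →ₐ[K] MvPolynomial V K :=
  aeval (fun v => if v ∈ A then 0 else X v)

private lemma span_X_eq_ker (A : Set V) :
    Ideal.span (X '' A : Set (MvPolynomial V K)) = RingHom.ker (killVars K A) := by
  apply le_antisymm
  · rw [Ideal.span_le]
    rintro _ ⟨v, hv, rfl⟩
    simp [RingHom.mem_ker, killVars, hv]
  · intro p hp
    have hker : (killVars K A) p = 0 := hp
    let π := Ideal.Quotient.mkₐ K (Ideal.span (X '' A : Set (MvPolynomial V K)))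
    have hcomp : π.comp (killVars K A) = π := by
      apply MvPolynomial.algHom_ext
      intro v
      by_cases hv : v ∈ A
      · have hXv : (X v : MvPolynomial V K) ∈ Ideal.span (X '' A) :=
          Ideal.subset_span ⟨v, hv, rfl⟩
        simp [killVars, hv, π, Ideal.Quotient.eq_zero_iff_mem.2 hXv]
      · simp [killVars, hv]
    have h2 := AlgHom.congr_fun hcomp p
    rw [AlgHom.comp_apply, hker, map_zero] at h2
    have : π p = 0 := h2.symm
    exact Ideal.Quotient.eq_zero_iff_mem.1 this

private lemma span_X_isPrime (A : Set V) :
    (Ideal.span (X '' A : Set (MvPolynomial V K))).IsPrime := by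
  rw [span_X_eq_ker]
  exact RingHom.ker_isPrime _

private lemma X_mem_span_X_iff {A : Set V} {w : V} :
    (X w : MvPolynomial V K) ∈ Ideal.span (X '' A) ↔ w ∈ A := by
  rw [span_X_eq_ker]
  constructor
  · intro hw
    have : (killVars K A) (X w) = 0 := hw
    by_contra hA
    simp [killVars, hA] at this
  · intro hw
    show (killVars K A) (X w) = 0
    simp [killVars, hw]

end SpanX

section Prod
variable {R τ : Type*} [CommRing R]

private lemma prod_mem_pow_card (I : Ideal R) (t : Finset τ) (a : τ → R)
    (h : ∀ i ∈ t, a i ∈ I) : (∏ i ∈ t, a i) ∈ I ^ t.card := by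
  classical
  induction t using Finset.induction_on with
  | empty => simp
  | @insert x t' hx ih =>
    rw [Finset.prod_insert hx, Finset.card_insert_of_notMem hx, pow_succ, mul_comm]
    exact Ideal.mul_mem_mul (h x (Finset.mem_insert_self x t'))
      (ih fun i hi => h i (Finset.mem_insert_of_mem hi))

private lemma exists_mem_of_prod_mem_prime {P : Ideal R} (hP : P.IsPrime)
    (t : Finset τ) (a : τ → R) (h : (∏ i ∈ t, a i) ∈ P) : ∃ i ∈ t, a i ∈ P := by
  classical
  induction t using Finset.induction_on with
  | empty => simp at h; exact absurd (P.eq_top_of_isUnit_mem h isUnit_one) hP.ne_top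
  | @insert x t' hx ih =>
    rw [Finset.prod_insert hx] at h
    rcases hP.mem_or_mem h with h1 | h2
    · exact ⟨x, Finset.mem_insert_self x t', h1⟩
    · obtain ⟨i, hi, hai⟩ := ih h2
      exact ⟨i, Finset.mem_insert_of_mem hi, hai⟩

end Prod

section Graph

open SimpleGraph

private lemma exists_odd_closed_walk {V : Type*} {G : SimpleGraph V} (h : ¬ _root_.IsBipartite G) :
    ∃ (n : ℕ) (f : ℕ → V), Odd n ∧ f n = f 0 ∧ ∀ i < n, G.Adj (f i) (f (i + 1)) := by
  by_contra hno
  push_neg at hno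
  have hw : ∀ (v : V) (p : G.Walk v v), ¬ Odd p.length := by
    intro v p hodd
    obtain ⟨i, hi, hadj⟩ := hno p.length p.getVert hodd (by simp)
    exact hadj (p.adj_getVert_succ hi)
  apply h
  refine ⟨{v | ∃ p : G.Walk ((G.connectedComponentMk v).out) v, Even p.length}, ?_⟩
  intro u v huv
  have hroot : (G.connectedComponentMk v).out = (G.connectedComponentMk u).out := by
    rw [ConnectedComponent.connectedComponentMk_eq_of_adj huv]
  constructor
  · rintro ⟨p, hp⟩ ⟨q, hq⟩
    apply hw _ ((p.concat huv).append (q.copy hroot rfl).reverse)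
    rw [Walk.length_append, Walk.length_concat, Walk.length_reverse, Walk.length_copy]
    obtain ⟨a, ha⟩ := hp
    obtain ⟨b, hb⟩ := hq
    exact ⟨a + b, by omega⟩
  · intro hvA
    have hreach : G.Reachable ((G.connectedComponentMk u).out) u :=
      ConnectedComponent.exact (Quot.out_eq _)
    obtain ⟨p⟩ := hreach
    rcases Nat.even_or_odd p.length with he | ho
    · exact ⟨p, he⟩
    · exfalso
      apply hvA
      refine ⟨(p.concat huv).copy hroot.symm rfl, ?_⟩
      rw [Walk.length_copy, Walk.length_concat]
      obtain ⟨a, ha⟩ := ho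
      exact ⟨a + 1, by omega⟩

private lemma exists_odd_cycle {V : Type*} {G : SimpleGraph V} (h : ¬ _root_.IsBipartite G) :
    ∃ (n : ℕ) (f : ℕ → V), Odd n ∧ f n = f 0 ∧ (∀ i < n, G.Adj (f i) (f (i + 1))) ∧
      ∀ a < n, ∀ b < n, f a = f b → a = b := by
  have hex := exists_odd_closed_walk h
  set P : ℕ → Prop := fun n => ∃ f : ℕ → V, Odd n ∧ f n = f 0 ∧ ∀ i < n, G.Adj (f i) (f (i + 1))
    with hP
  have hex' : ∃ n, P n := by
    obtain ⟨n, f, h1, h2, h3⟩ := hex; exact ⟨n, f, h1, h2, h3⟩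
  classical
  set n := Nat.find hex' with hn
  obtain ⟨f, hodd, hcl, hadj⟩ : P n := Nat.find_spec hex'
  refine ⟨n, f, hodd, hcl, hadj, ?_⟩
  have key : ∀ a b, a < b → b < n → f a ≠ f b := by
    intro a b hab hbn hfab
    have hban : b - a < n := by omega
    rcases Nat.even_or_odd (b - a) with he | ho
    · set m := n - (b - a) with hm
      have hmn : m < n := by omega
      have hodd_m : Odd m := by
        obtain ⟨c, hc⟩ := hodd
        obtain ⟨d, hd⟩ := he
        exact ⟨c - d, by omega⟩
      apply Nat.find_min hex' hmn
      refine ⟨fun k => if k ≤ a then f k else f (k + (b - a)), hodd_m, ?_, ?_⟩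
      · have h1 : ¬ m ≤ a := by omega
        have h2 : m + (b - a) = n := by omega
        simp only [h1, if_false, if_pos (Nat.zero_le a), h2, hcl]
      · intro i hi
        rcases lt_trichotomy i a with hia | hia | hia
        · have : i + 1 ≤ a := hia
          simp only [if_pos (Nat.le_of_lt hia), if_pos this]
          exact hadj i (by omega)
        · have h1 : ¬ a + 1 ≤ a := by omega
          have h2 : a + 1 + (b - a) = b + 1 := by omega
          simp only [hia, if_pos (le_refl a), h1, if_false, h2, hfab]
          exact hadj b (by omega)
        · have h1 : ¬ i ≤ a := by omega
          have h2 : ¬ i + 1 ≤ a := by omega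
          have h3 : i + 1 + (b - a) = (i + (b - a)) + 1 := by omega
          simp only [h1, h2, if_false, h3]
          exact hadj (i + (b - a)) (by omega)
    · apply Nat.find_min hex' hban
      refine ⟨fun k => f (a + k), ho, ?_, ?_⟩
      · have h1 : a + (b - a) = b := by omega
        show f (a + (b - a)) = f (a + 0)
        rw [h1, Nat.add_zero, ← hfab]
      · intro i hi
        have h1 : a + (i + 1) = (a + i) + 1 := by omega
        show G.Adj (f (a + i)) (f (a + (i + 1)))
        rw [h1]
        exact hadj (a + i) (by omega)
  intro a ha b hb hfab
  rcases lt_trichotomy a b with hlt | heq | hgt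
  · exact absurd hfab (key a b hlt hb)
  · exact heq
  · exact absurd hfab.symm (key b a hgt ha)

end Graph

section Counting

private lemma mod_succ_inj {n : ℕ} (hn : 0 < n) :
    ∀ i < n, ∀ j < n, (i + 1) % n = (j + 1) % n → i = j := by
  intro i hi j hj hmod
  rcases Nat.lt_or_ge (i + 1) n with h1 | h1 <;> rcases Nat.lt_or_ge (j + 1) n with h2 | h2
  · rw [Nat.mod_eq_of_lt h1, Nat.mod_eq_of_lt h2] at hmod; omega
  · have : j + 1 = n := by omega
    rw [Nat.mod_eq_of_lt h1, this, Nat.mod_self] at hmod; omega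
  · have : i + 1 = n := by omega
    rw [Nat.mod_eq_of_lt h2, this, Nat.mod_self] at hmod; omega
  · omega

private lemma card_filter_ge {n s : ℕ} (hn : n = 2 * s + 1) (Q : ℕ → Prop)
    [DecidablePred Q] (hcov : ∀ i < n, Q i ∨ Q ((i + 1) % n)) :
    s + 1 ≤ ((Finset.range n).filter Q).card := by
  have hn0 : 0 < n := by omega
  have hinj : ∀ i ∈ (Finset.range n).filter (fun i => ¬ Q i),
      (i + 1) % n ∈ (Finset.range n).filter Q := by
    intro i hi
    rw [Finset.mem_filter, Finset.mem_range] at hi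
    rw [Finset.mem_filter, Finset.mem_range]
    exact ⟨Nat.mod_lt _ hn0, (hcov i hi.1).resolve_left hi.2⟩
  have hcard := Finset.card_le_card_of_injOn (fun i => (i + 1) % n) hinj ?_
  · have := Finset.card_filter_add_card_filter_not
      (s := Finset.range n) (p := Q)
    rw [Finset.card_range] at this
    omega
  · intro i hi j hj hij
    rw [Finset.coe_filter, Set.mem_setOf_eq, Finset.mem_range] at hi hj
    exact mod_succ_inj hn0 i hi.1 j hj.1 hij

end Counting

section Degree

private lemma not_mem_edgeIdeal_pow {K V : Type*} [Field K] (G : SimpleGraph V)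
    {n s : ℕ} (hn : n = 2 * s + 1) (f : ℕ → V) :
    (∏ i ∈ Finset.range n, X (f i)) ∉ (edgeIdeal K G) ^ (s + 1) := by
  intro hm
  let φ : MvPolynomial V K →ₐ[K] Polynomial K := aeval (fun _ => Polynomial.X)
  have h1 : Ideal.map φ (edgeIdeal K G) ≤ Ideal.span {Polynomial.X ^ 2} := by
    rw [edgeIdeal, Ideal.map_span, Ideal.span_le]
    rintro _ ⟨_, ⟨u, v, huv, rfl⟩, rfl⟩
    have : φ (X u * X v) = Polynomial.X ^ 2 := by
      simp [φ, sq]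
    rw [this]
    exact Ideal.subset_span rfl
  have h2 : φ (∏ i ∈ Finset.range n, X (f i)) ∈ Ideal.span {Polynomial.X ^ (2 * (s + 1))} := by
    have := Ideal.mem_map_of_mem φ hm
    rw [Ideal.map_pow] at this
    have h3 : (Ideal.map φ (edgeIdeal K G)) ^ (s + 1) ≤ (Ideal.span {Polynomial.X ^ 2}) ^ (s + 1) :=
      Ideal.pow_right_mono h1 _
    rw [Ideal.span_singleton_pow, ← pow_mul, mul_comm 2 (s + 1), mul_comm (s + 1) 2] at h3
    exact h3 this
  have h4 : φ (∏ i ∈ Finset.range n, X (f i)) = Polynomial.X ^ n := by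
    rw [map_prod]
    simp [φ]
  rw [h4, Ideal.mem_span_singleton] at h2
  have h5 := Polynomial.natDegree_le_of_dvd h2 (pow_ne_zero _ Polynomial.X_ne_zero)
  rw [Polynomial.natDegree_pow, Polynomial.natDegree_pow, Polynomial.natDegree_X] at h5
  omega

end Degree


section Height

private lemma krullDim_ge {K V : Type*} [Field K] (s : ℕ) (p : Ideal (MvPolynomial V K))
    (hp : p.IsPrime) (vert : Fin (s + 1) → V) (hinj : Function.Injective vert)
    (hmem : ∀ j, (X (vert j) : MvPolynomial V K) ∈ p) :
    ((s + 1 : ℕ) : WithBot (WithTop ℕ)) ≤ ringKrullDim (Localization.AtPrime p) := by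
  haveI := hp
  set Qc : Fin (s + 2) → Ideal (MvPolynomial V K) :=
    fun j => Ideal.span (X '' (vert '' {i | (i : ℕ) < (j : ℕ)})) with hQc
  have hprime : ∀ j, (Qc j).IsPrime := fun j => span_X_isPrime _
  have hle : ∀ j, Qc j ≤ p := by
    intro j
    rw [hQc, Ideal.span_le]
    rintro _ ⟨_, ⟨i, _, rfl⟩, rfl⟩
    exact hmem i
  have hsm : StrictMono Qc := by
    intro j j' hjj'
    have hj : (j : ℕ) < s + 1 := by
      have := j'.isLt
      omega
    constructor
    · apply Ideal.span_mono
      apply Set.image_mono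
      apply Set.image_mono
      intro i hi
      simp only [Set.mem_setOf_eq] at hi ⊢
      exact lt_of_lt_of_le hi (by exact_mod_cast hjj'.le)
    · intro hcon
      have hmem' : (X (vert ⟨(j : ℕ), hj⟩) : MvPolynomial V K) ∈ Qc j' := by
        apply Ideal.subset_span
        exact ⟨_, ⟨⟨(j : ℕ), hj⟩, hjj', rfl⟩, rfl⟩
      have h3 : (X (vert ⟨(j : ℕ), hj⟩) : MvPolynomial V K)
          ∈ Ideal.span (X '' (vert '' {i | (i : ℕ) < (j : ℕ)})) := hcon hmem'
      rw [X_mem_span_X_iff] at h3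
      obtain ⟨i, hi, hvi⟩ := h3
      have h4 := hinj hvi
      rw [h4] at hi
      simp only [Set.mem_setOf_eq] at hi
      exact lt_irrefl _ hi
  let e := IsLocalization.AtPrime.orderIsoOfPrime (Localization.AtPrime p) p
  let chain : LTSeries (PrimeSpectrum (Localization.AtPrime p)) :=
    LTSeries.mk (s + 1)
      (fun j => ⟨(e.symm ⟨Qc j, hprime j, hle j⟩).1, (e.symm ⟨Qc j, hprime j, hle j⟩).2⟩)
      (by
        intro j j' hjj'
        have h1 : (⟨Qc j, hprime j, hle j⟩ : {q : Ideal (MvPolynomial V K) // q.IsPrime ∧ q ≤ p})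
            < ⟨Qc j', hprime j', hle j'⟩ := Subtype.mk_lt_mk.2 (hsm hjj')
        have h2 := e.symm.strictMono h1
        exact h2)
  have := Order.LTSeries.length_le_krullDim chain
  rw [ringKrullDim]
  exact this

end Height

/-- Let `G` be a finite simple graph with edge ideal `I` of height `c`. If `I^{(k)} = I^k`
for all `1 ≤ k ≤ c`, then `G` is bipartite. -/
theorem isBipartite_of_symbolicPower_eq_pow {K V : Type*} [Field K] [Fintype V]
    [DecidableEq V] (G : SimpleGraph V) (c : ℕ)
    (hc : idealHeight (edgeIdeal K G) = c)
    (h : ∀ k : ℕ, 1 ≤ k → k ≤ c → symbolicPower (edgeIdeal K G) k = edgeIdeal K G ^ k) :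
    IsBipartite G := by
  classical
  by_contra hbip
  obtain ⟨n, f, hodd, hcl, hadj, hinjf⟩ := exists_odd_cycle hbip
  obtain ⟨s, hs⟩ := hodd
  -- the cyclic edges all lie in the edge ideal
  have hedge : ∀ i < n, (X (f i) * X (f ((i + 1) % n)) : MvPolynomial V K) ∈ edgeIdeal K G := by
    intro i hi
    rcases Nat.lt_or_ge (i + 1) n with h1 | h1
    · rw [Nat.mod_eq_of_lt h1]
      exact Ideal.subset_span ⟨f i, f (i + 1), hadj i hi, rfl⟩
    · have hieq : i + 1 = n := by omega
      rw [hieq, Nat.mod_self]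
      have hadj' : G.Adj (f i) (f 0) := by
        have := hadj i hi
        rw [hieq, hcl] at this
        exact this
      exact Ideal.subset_span ⟨f i, f 0, hadj', rfl⟩
  have hcover : ∀ (p : Ideal (MvPolynomial V K)), p.IsPrime → edgeIdeal K G ≤ p →
      ∀ i < n, (X (f i) : MvPolynomial V K) ∈ p ∨ (X (f ((i + 1) % n)) : MvPolynomial V K) ∈ p :=
    fun p hp hIp i hi => hp.mem_or_mem (hIp (hedge i hi))
  -- height bound : s + 1 ≤ c
  have hheight : s + 1 ≤ c := by
    have hbound : ((s + 1 : ℕ) : WithBot (WithTop ℕ)) ≤ idealHeight (edgeIdeal K G) := by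
      rw [idealHeight]
      refine le_iInf fun p => le_iInf fun hp => le_iInf fun hIp => ?_
      have hT : s + 1 ≤ ((Finset.range n).filter
          (fun i => (X (f i) : MvPolynomial V K) ∈ p)).card :=
        card_filter_ge hs _ (hcover p hp hIp)
      obtain ⟨t, htT, htcard⟩ := Finset.exists_subset_card_eq hT
      let e := t.orderIsoOfFin htcard
      have hmemt : ∀ j : Fin (s + 1), ((e j : ℕ) ∈ Finset.range n ∧
          (X (f (e j : ℕ)) : MvPolynomial V K) ∈ p) := by
        intro j
        have := htT (e j).2
        rw [Finset.mem_filter] at this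
        exact this
      apply krullDim_ge s p hp (fun j => f ((e j : ℕ)))
      · intro j j' hjj'
        have h1 := hinjf _ (Finset.mem_range.1 (hmemt j).1) _ (Finset.mem_range.1 (hmemt j').1) hjj'
        have h2 : (e j : { x // x ∈ t }) = e j' := Subtype.ext h1
        exact e.injective h2
      · intro j
        exact (hmemt j).2
    rw [hc] at hbound
    exact_mod_cast hbound
  -- the special monomial
  set m : MvPolynomial V K := ∏ i ∈ Finset.range n, X (f i) with hm
  -- m lies in the (s+1)-st symbolic power
  have hmem : m ∈ symbolicPower (edgeIdeal K G) (s + 1) := by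
    rw [symbolicPower, Ideal.mem_iInf]
    intro P
    rw [Ideal.mem_iInf]
    intro hP
    haveI hPp : P.IsPrime := hP.1.1
    set S : Set V := {v | (X v : MvPolynomial V K) ∈ P} with hS
    have hQP : Ideal.span (X '' S : Set (MvPolynomial V K)) ≤ P := by
      rw [Ideal.span_le]
      rintro _ ⟨v, hv, rfl⟩
      exact hv
    have hedgeS : ∀ u v : V, G.Adj u v → u ∈ S ∨ v ∈ S := by
      intro u v huv
      have : (X u * X v : MvPolynomial V K) ∈ P :=
        hP.1.2 (Ideal.subset_span ⟨u, v, huv, rfl⟩)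
      exact hPp.mem_or_mem this
    -- minimal vertex cover property
    have hwit : ∀ v ∈ S, ∃ u, G.Adj v u ∧ u ∉ S := by
      intro v hv
      by_contra hcon
      push_neg at hcon
      have hIQ' : edgeIdeal K G ≤ Ideal.span (X '' (S \ {v}) : Set (MvPolynomial V K)) := by
        rw [edgeIdeal, Ideal.span_le]
        rintro _ ⟨a, b, hab, rfl⟩
        have hmemS' : a ∈ S \ {v} ∨ b ∈ S \ {v} := by
          rcases hedgeS a b hab with ha | hb
          · by_cases hav : a = v
            · subst hav
              refine Or.inr ⟨hcon b hab, ?_⟩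
              exact fun hbv => G.loopless.irrefl a (hbv ▸ hab)
            · exact Or.inl ⟨ha, hav⟩
          · by_cases hbv : b = v
            · subst hbv
              refine Or.inl ⟨hcon a hab.symm, ?_⟩
              exact fun hav => G.loopless.irrefl b (hav ▸ hab.symm)
            · exact Or.inr ⟨hb, hbv⟩
        rcases hmemS' with h' | h'
        · exact Ideal.mul_mem_right _ _ (Ideal.subset_span ⟨a, h', rfl⟩)
        · exact Ideal.mul_mem_left _ _ (Ideal.subset_span ⟨b, h', rfl⟩)
      have hQ'P : Ideal.span (X '' (S \ {v}) : Set (MvPolynomial V K)) ≤ P :=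
        le_trans (Ideal.span_mono (Set.image_mono Set.diff_subset)) hQP
      have hPQ' := hP.2 ⟨span_X_isPrime _, hIQ'⟩ hQ'P
      have hXv : (X v : MvPolynomial V K) ∈ Ideal.span (X '' (S \ {v})) := hPQ' hv
      rw [X_mem_span_X_iff] at hXv
      exact hXv.2 rfl
    have hwit' : ∀ v : V, ∃ u, v ∈ S → G.Adj v u ∧ u ∉ S := by
      intro v
      by_cases hv : v ∈ S
      · obtain ⟨u, hu⟩ := hwit v hv
        exact ⟨u, fun _ => hu⟩
      · exact ⟨v, fun h' => absurd h' hv⟩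
    choose g hg using hwit'
    -- the positions of the cycle hitting S
    set T : Finset ℕ := (Finset.range n).filter (fun i => f i ∈ S) with hT
    have hTcard : s + 1 ≤ T.card := by
      apply card_filter_ge hs
      intro i hi
      rcases hcover P hPp hP.1.2 i hi with h' | h'
      · exact Or.inl h'
      · exact Or.inr h'
    set u : MvPolynomial V K := ∏ i ∈ T, X (g (f i)) with hu
    have huP : u ∉ P := by
      intro huP
      obtain ⟨i, hiT, hXi⟩ := exists_mem_of_prod_mem_prime hPp T _ huP
      have hfiS : f i ∈ S := (Finset.mem_filter.1 hiT).2
      exact (hg (f i) hfiS).2 hXi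
    have hum : u * m ∈ edgeIdeal K G ^ (s + 1) := by
      have hsplit : m = (∏ i ∈ T, X (f i)) *
          ∏ i ∈ (Finset.range n).filter (fun i => ¬ f i ∈ S), X (f i) :=
        (Finset.prod_filter_mul_prod_filter_not (Finset.range n) (fun i => f i ∈ S) _).symm
      have hprod : u * (∏ i ∈ T, (X (f i) : MvPolynomial V K)) =
          ∏ i ∈ T, (X (f i) * X (g (f i))) := by
        rw [hu, ← Finset.prod_mul_distrib]
        exact Finset.prod_congr rfl fun i _ => mul_comm _ _
      have hkey : (∏ i ∈ T, ((X (f i) : MvPolynomial V K) * X (g (f i)))) ∈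
          edgeIdeal K G ^ (s + 1) := by
        apply Ideal.pow_le_pow_right hTcard
        apply prod_mem_pow_card
        intro i hiT
        have hfiS : f i ∈ S := (Finset.mem_filter.1 hiT).2
        exact Ideal.subset_span ⟨f i, g (f i), (hg (f i) hfiS).1, rfl⟩
      have hrw : u * m = (∏ i ∈ T, ((X (f i) : MvPolynomial V K) * X (g (f i)))) *
          ∏ i ∈ (Finset.range n).filter (fun i => ¬ f i ∈ S), X (f i) := by
        rw [hsplit, ← mul_assoc, hprod]
      rw [hrw]
      exact Ideal.mul_mem_right _ _ hkey
    -- pass to the localization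
    rw [Ideal.mem_comap]
    have h1 : algebraMap (MvPolynomial V K) (Localization.AtPrime P) (u * m) ∈
        Ideal.map (algebraMap (MvPolynomial V K) (Localization.AtPrime P))
          (edgeIdeal K G ^ (s + 1)) := Ideal.mem_map_of_mem _ hum
    rw [map_mul] at h1
    have hunit : IsUnit (algebraMap (MvPolynomial V K) (Localization.AtPrime P) u) :=
      IsLocalization.map_units _ (⟨u, huP⟩ : P.primeCompl)
    obtain ⟨w, hw⟩ := hunit
    rw [← hw] at h1
    have h2 := Ideal.mul_mem_left _ (↑w⁻¹ : Localization.AtPrime P) h1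
    rw [← mul_assoc, Units.inv_mul, one_mul] at h2
    exact h2
  rw [h (s + 1) (by omega) hheight] at hmem
  exact not_mem_edgeIdeal_pow G hs f hmem
end
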